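/- arXiv:math/0603148 — 3 statements merged into one kernel-verified Lean document; each statement's English description precedes it below -/
import Mathlib

section
/- Let A ≥ c₂ > c₁ > 0 be real numbers. Then there exists θ > 0 such that for every positive integer N and all real numbers a₁, …, a_N satisfying a_j ≤ A for every 1 ≤ j ≤ N and ∑_{j=1}^{N} a_j ≥ c₂·N, there exist an integer l > θ·N and integers 1 ≤ n₁ < n₂ < ⋯ < n_l ≤ N such that ∑_{j=n+1}^{n_i} a_j ≥ c₁·(n_i − n) for every integer n with 0 ≤ n < n_i and every 1 ≤ i ≤ l. -/
open Finset

noncomputable def plissS (c₁ : ℝ) (a : ℕ → ℝ) (n : ℕ) : ℝ :=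
  ∑ j ∈ Finset.Icc 1 n, (a j - c₁)

open Classical in
noncomputable def plissG (c₁ : ℝ) (a : ℕ → ℝ) (k : ℕ) : Finset ℕ :=
  (Finset.Icc 1 k).filter (fun n => ∀ m < n, plissS c₁ a m ≤ plissS c₁ a n)

lemma plissS_eq (c₁ : ℝ) (a : ℕ → ℝ) (n : ℕ) :
    plissS c₁ a n = (∑ j ∈ Finset.Icc 1 n, a j) - c₁ * n := by
  simp [plissS, Finset.sum_sub_distrib, Nat.card_Icc, mul_comm]

lemma pliss_diff (c₁ : ℝ) (a : ℕ → ℝ) {m n : ℕ} (h : m ≤ n) :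
    plissS c₁ a n - plissS c₁ a m
      = (∑ j ∈ Finset.Icc (m+1) n, a j) - c₁ * ((n : ℝ) - m) := by
  have key : (∑ j ∈ Finset.Icc 1 m, a j) + ∑ j ∈ Finset.Icc (m+1) n, a j
      = ∑ j ∈ Finset.Icc 1 n, a j := by
    rw [show (1 : ℕ) = 0 + 1 from rfl, Finset.Icc_add_one_left_eq_Ioc, Finset.Icc_add_one_left_eq_Ioc,
      zero_add, Finset.Icc_add_one_left_eq_Ioc]
    exact Finset.sum_Ioc_consecutive _ (Nat.zero_le m) h
  rw [plissS_eq, plissS_eq]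
  have : (m : ℝ) ≤ n := Nat.cast_le.mpr h
  linarith [key]

lemma plissG_mono (c₁ : ℝ) (a : ℕ → ℝ) {k k' : ℕ} (h : k ≤ k') :
    plissG c₁ a k ⊆ plissG c₁ a k' := by
  classical
  apply Finset.filter_subset_filter
  exact Finset.Icc_subset_Icc_right h

lemma pliss_count (A c₁ : ℝ) (hA : 0 ≤ A - c₁) (a : ℕ → ℝ) (N : ℕ)
    (ha : ∀ j, 1 ≤ j → j ≤ N → a j ≤ A) :
    ∀ k, k ≤ N → plissS c₁ a k ≤ (plissG c₁ a k).card * (A - c₁) := by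
  classical
  intro k
  induction k using Nat.strong_induction_on with
  | _ k ih =>
    intro hkN
    match k, hkN, ih with
    | 0, _, _ =>
      have : plissS c₁ a 0 = 0 := by simp [plissS]
      rw [this]
      exact mul_nonneg (Nat.cast_nonneg _) hA
    | (m+1), hkN, ih =>
      by_cases hrec : ∀ j < m+1, plissS c₁ a j ≤ plissS c₁ a (m+1)
      · have hnotmem : (m+1) ∉ plissG c₁ a m := by
          intro hmem
          have := Finset.mem_Icc.mp (Finset.mem_filter.mp hmem).1
          omega
        have hG : plissG c₁ a (m+1) = insert (m+1) (plissG c₁ a m) := by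
          unfold plissG
          rw [show Finset.Icc 1 (m+1) = insert (m+1) (Finset.Icc 1 m) by
            ext x; simp [Finset.mem_Icc, Finset.mem_insert]; omega]
          rw [Finset.filter_insert, if_pos hrec]
        have hcard : (plissG c₁ a (m+1)).card = (plissG c₁ a m).card + 1 := by
          rw [hG, Finset.card_insert_of_notMem hnotmem]
        have hstep : plissS c₁ a (m+1) = plissS c₁ a m + (a (m+1) - c₁) := by
          unfold plissS
          rw [← Finset.sum_Icc_succ_top (by omega : 1 ≤ m+1)]
        have hbound : a (m+1) ≤ A := ha (m+1) (by omega) hkN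
        have hIH := ih m (by omega) (by omega)
        rw [hcard, hstep]
        push_cast
        nlinarith
      · push_neg at hrec
        obtain ⟨j, hj, hlt⟩ := hrec
        have hIH := ih j hj (by omega)
        have hmono : (plissG c₁ a j).card ≤ (plissG c₁ a (m+1)).card :=
          Finset.card_le_card (plissG_mono c₁ a (by omega))
        have : ((plissG c₁ a j).card : ℝ) * (A - c₁)
            ≤ ((plissG c₁ a (m+1)).card : ℝ) * (A - c₁) := by
          apply mul_le_mul_of_nonneg_right _ hA
          exact_mod_cast hmono
        linarith

/-- **Pliss Lemma.** Given real numbers `A ≥ c₂ > c₁ > 0` there exists `θ > 0` such that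
for every positive integer `N` and real numbers `a₁, …, a_N` bounded above by `A` with
`∑_{j=1}^N a_j ≥ c₂ N`, there are `l > θ N` indices `1 ≤ n₁ < ⋯ < n_l ≤ N` such that
`∑_{j=n+1}^{n_i} a_j ≥ c₁ (n_i - n)` for all `0 ≤ n < n_i` and `1 ≤ i ≤ l`. -/
theorem pliss_lemma (A c₁ c₂ : ℝ) (hc₁ : 0 < c₁) (hc₁c₂ : c₁ < c₂) (hc₂A : c₂ ≤ A) :
    ∃ θ : ℝ, 0 < θ ∧
      ∀ (N : ℕ), 0 < N → ∀ a : ℕ → ℝ,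
        (∀ j, 1 ≤ j → j ≤ N → a j ≤ A) →
        c₂ * (N : ℝ) ≤ ∑ j ∈ Finset.Icc 1 N, a j →
        ∃ (l : ℕ) (n : ℕ → ℕ),
          θ * (N : ℝ) < (l : ℝ) ∧
          (∀ i, 1 ≤ i → i ≤ l → 1 ≤ n i ∧ n i ≤ N) ∧
          (∀ i i', 1 ≤ i → i < i' → i' ≤ l → n i < n i') ∧
          (∀ i, 1 ≤ i → i ≤ l → ∀ m : ℕ, m < n i →
            c₁ * ((n i : ℝ) - (m : ℝ)) ≤ ∑ j ∈ Finset.Icc (m + 1) (n i), a j) := by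
  classical
  have hAc₁ : 0 < A - c₁ := by linarith
  refine ⟨(c₂ - c₁) / (2 * (A - c₁)), div_pos (by linarith) (by linarith), ?_⟩
  intro N hN a ha hsum
  set G := plissG c₁ a N with hGdef
  set L := G.sort (· ≤ ·) with hLdef
  set l := G.card with hldef
  have hLlen : L.length = l := Finset.length_sort _
  refine ⟨l, fun i => L.getD (i-1) 0, ?_, ?_, ?_, ?_⟩
  · -- counting
    have hcount := pliss_count A c₁ hAc₁.le a N ha N le_rfl
    have hSN : (c₂ - c₁) * N ≤ plissS c₁ a N := by
      rw [plissS_eq]; linarith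
    have hl : (c₂ - c₁) * N ≤ (l : ℝ) * (A - c₁) := le_trans hSN hcount
    have hNpos : (0 : ℝ) < N := by exact_mod_cast hN
    rw [div_mul_eq_mul_div, div_lt_iff₀ (by positivity)]
    nlinarith
  · intro i h1 h2
    have hlt : i - 1 < L.length := by omega
    have hmem : L.getD (i-1) 0 ∈ G := by
      rw [List.getD_eq_get _ _ ⟨i-1, hlt⟩]
      exact (Finset.mem_sort _).mp (List.get_mem _ _)
    have := Finset.mem_Icc.mp (Finset.mem_filter.mp hmem).1
    exact this
  · intro i i' h1 h2 h3
    have hlt : i - 1 < L.length := by omega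
    have hlt' : i' - 1 < L.length := by omega
    have hsorted : L.Pairwise (· < ·) := (Finset.sortedLT_sort G).pairwise
    show L.getD (i-1) 0 < L.getD (i'-1) 0
    rw [List.getD_eq_get _ _ ⟨i-1, hlt⟩, List.getD_eq_get _ _ ⟨i'-1, hlt'⟩]
    exact List.Pairwise.rel_get_of_lt hsorted (by simp; omega)
  · intro i h1 h2 m hm
    have hlt : i - 1 < L.length := by omega
    have hmem : L.getD (i-1) 0 ∈ G := by
      rw [List.getD_eq_get _ _ ⟨i-1, hlt⟩]
      exact (Finset.mem_sort _).mp (List.get_mem _ _)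
    set ni := L.getD (i-1) 0
    have hrec : ∀ m' < ni, plissS c₁ a m' ≤ plissS c₁ a ni :=
      (Finset.mem_filter.mp hmem).2
    have h := hrec m hm
    have hdiff := pliss_diff c₁ a (le_of_lt hm)
    linarith
end

section
/- Let (b_j)_{j≥1} be a sequence of positive real numbers, and let A > 0, c > 0 be such that |log b_j| ≤ A for every j ≥ 1. Assume that liminf_{n→∞} (1/n) ∑_{j=1}^{n} log b_j < −c. Then, setting σ = e^{−c/2} ∈ (0,1), the set of σ-hyperbolic times for (b_j) is infinite; that is, there are infinitely many integers n ≥ 1 such that ∏_{j=n−k+1}^{n} b_j ≤ σ^k for all 1 ≤ k ≤ n. -/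
/-- If `(b_j)_{j ≥ 1}` is a sequence of positive reals with `|log b_j| ≤ A`, and
`liminf (1/n) ∑_{j=1}^n log b_j < -c` for some `c > 0`, then, with `σ = e^{-c/2}`,
there are infinitely many `σ`-hyperbolic times for `(b_j)`, i.e. infinitely many
`n ≥ 1` such that `∏_{j=n-k+1}^{n} b_j ≤ σ^k` for all `1 ≤ k ≤ n`. -/
theorem infinitely_many_hyperbolic_times (b : ℕ → ℝ) (A c : ℝ) (hA : 0 < A) (hc : 0 < c)
    (hbpos : ∀ j, 1 ≤ j → 0 < b j)
    (hbd : ∀ j, 1 ≤ j → |Real.log (b j)| ≤ A)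
    (hliminf : Filter.liminf
        (fun n : ℕ => (1 / (n : ℝ)) * ∑ j ∈ Finset.Icc 1 n, Real.log (b j))
        Filter.atTop < -c)
    (σ : ℝ) (hσ : σ = Real.exp (-(c / 2))) :
    {n : ℕ | 1 ≤ n ∧ ∀ k, 1 ≤ k → k ≤ n →
      ∏ j ∈ Finset.Icc (n - k + 1) n, b j ≤ σ ^ k}.Infinite := by
  classical
  obtain ⟨S, hSdef⟩ : ∃ S : ℕ → ℝ, S = fun n => ∑ j ∈ Finset.Icc 1 n, Real.log (b j) := ⟨_, rfl⟩
  obtain ⟨T, hTdef⟩ : ∃ T : ℕ → ℝ, T = fun n => S n + (c / 2) * n := ⟨_, rfl⟩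
  have hSval : ∀ n, S n = ∑ j ∈ Finset.Icc 1 n, Real.log (b j) := fun n => by rw [hSdef]
  have hTval : ∀ n, T n = S n + (c / 2) * n := fun n => by rw [hTdef]
  have hliminf' : Filter.liminf (fun n : ℕ => (1 / (n : ℝ)) * S n) Filter.atTop < -c := by
    simp only [hSdef]; exact hliminf
  -- S n ≥ -A n
  have hSlb : ∀ n : ℕ, -(A * n) ≤ S n := by
    intro n
    rw [hSval]
    have : ∀ j ∈ Finset.Icc 1 n, -A ≤ Real.log (b j) := by
      intro j hj
      rw [Finset.mem_Icc] at hj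
      exact (abs_le.1 (hbd j hj.1)).1
    calc -(A * n) = ∑ _j ∈ Finset.Icc 1 n, (-A) := by
          rw [Finset.sum_const, Nat.card_Icc]
          simp [mul_comm]
      _ ≤ _ := Finset.sum_le_sum this
  -- S n ≤ A n
  have hSub : ∀ n : ℕ, S n ≤ A * n := by
    intro n
    rw [hSval]
    have : ∀ j ∈ Finset.Icc 1 n, Real.log (b j) ≤ A := by
      intro j hj
      rw [Finset.mem_Icc] at hj
      exact (abs_le.1 (hbd j hj.1)).2
    calc _ ≤ ∑ _j ∈ Finset.Icc 1 n, A := Finset.sum_le_sum this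
      _ = A * n := by rw [Finset.sum_const, Nat.card_Icc]; simp [mul_comm]
  have hcob : Filter.IsCoboundedUnder (· ≥ ·) Filter.atTop
      (fun n : ℕ => (1 / (n : ℝ)) * S n) := by
    apply Filter.isCoboundedUnder_ge_of_eventually_le Filter.atTop (x := A)
    filter_upwards [Filter.eventually_ge_atTop 1] with n hn
    have hn' : (0 : ℝ) < n := by exact_mod_cast hn
    have h0 := hSub n
    have h2 : (1 / (n : ℝ)) * S n ≤ (1 / n) * (A * n) :=
      mul_le_mul_of_nonneg_left h0 (by positivity)
    have h3 : (1 / (n : ℝ)) * (A * n) = A := by field_simp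
    linarith
  have hfreq : ∃ᶠ n : ℕ in Filter.atTop, (1 / (n : ℝ)) * S n < -c :=
    Filter.frequently_lt_of_liminf_lt hcob hliminf'
  -- key: elements above any bound
  have key : ∀ N : ℕ, ∃ p, N < p ∧ p ∈ {n : ℕ | 1 ≤ n ∧ ∀ k, 1 ≤ k → k ≤ n →
      ∏ j ∈ Finset.Icc (n - k + 1) n, b j ≤ σ ^ k} := by
    intro N
    obtain ⟨m₀, hm₀mem, hm₀min⟩ :=
      Finset.exists_min_image (Finset.range (N + 1)) T ⟨0, Finset.mem_range.2 (Nat.succ_pos N)⟩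
    set K : ℕ := max (N + 1) (⌈-2 * T m₀ / c⌉₊ + 1) with hK
    obtain ⟨n, hnK, hn⟩ := (Filter.frequently_atTop.1 hfreq) K
    have hn1 : 1 ≤ n := le_trans (le_trans (Nat.succ_le_succ (Nat.zero_le N)) (le_max_left _ _)) hnK
    have hnpos : (0 : ℝ) < n := by exact_mod_cast hn1
    have hSn : S n < -c * n := by
      have h := mul_lt_mul_of_pos_left hn hnpos
      rw [← mul_assoc] at h
      have : (n : ℝ) * (1 / n) = 1 := by field_simp
      rw [this, one_mul] at h
      linarith [h]
    have hTn : T n < -(c / 2) * n := by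
      rw [hTval]
      nlinarith [hSn]
    -- n is large enough that T n < T m₀
    have hnx : -2 * T m₀ / c < (n : ℝ) := by
      have h1 : (-2 * T m₀ / c) ≤ (⌈-2 * T m₀ / c⌉₊ : ℝ) := Nat.le_ceil _
      have h2 : (⌈-2 * T m₀ / c⌉₊ : ℝ) < n := by
        have : ⌈-2 * T m₀ / c⌉₊ + 1 ≤ n := le_trans (le_max_right _ _) hnK
        exact_mod_cast Nat.lt_of_succ_le this
      linarith
    have hTnm₀ : T n < T m₀ := by
      have h5 : -2 * T m₀ < c * (n : ℝ) := by
        have h6 := (div_lt_iff₀ hc).1 hnx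
        linarith
      have h7 : -(c / 2) * (n : ℝ) < T m₀ := by linarith
      linarith [hTn]
    -- minimize T over range (n+1)
    obtain ⟨p, hpmem, hpmin⟩ :=
      Finset.exists_min_image (Finset.range (n + 1)) T ⟨0, Finset.mem_range.2 (Nat.succ_pos n)⟩
    have hpn : p ≤ n := Nat.lt_succ_iff.1 (Finset.mem_range.1 hpmem)
    have hTpn : T p ≤ T n := hpmin n (Finset.mem_range.2 (Nat.lt_succ_self n))
    have hNp : N < p := by
      by_contra h
      push_neg at h
      have := hm₀min p (Finset.mem_range.2 (Nat.lt_succ_of_le h))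
      linarith [hTpn, hTnm₀]
    have hp1 : 1 ≤ p := Nat.succ_le_of_lt (Nat.lt_of_le_of_lt (Nat.zero_le N) hNp)
    refine ⟨p, hNp, hp1, ?_⟩
    intro k hk1 hkp
    set m : ℕ := p - k with hm
    have hmp : m ≤ p := Nat.sub_le _ _
    have hmk : m + k = p := Nat.sub_add_cancel hkp
    have hTm : T p ≤ T m := hpmin m (Finset.mem_range.2 (Nat.lt_succ_of_le (le_trans hmp hpn)))
    -- cast: (p:ℝ) - m = k
    have hcast : (p : ℝ) - (m : ℝ) = (k : ℝ) := by
      have : ((m + k : ℕ) : ℝ) = (p : ℝ) := by rw [hmk]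
      push_cast at this
      linarith
    have hsum : S p - S m ≤ -(c / 2) * k := by
      have h8 : S p + (c / 2) * p ≤ S m + (c / 2) * m := by
        rw [← hTval, ← hTval]; exact hTm
      nlinarith [hcast, h8]
    -- S p - S m is the sum over Ioc m p
    have hIcc : ∀ q : ℕ, Finset.Icc 1 q = Finset.Ioc 0 q := by
      intro q; ext x; simp [Nat.lt_iff_add_one_le]
    have hsplit : S m + ∑ j ∈ Finset.Ioc m p, Real.log (b j) = S p := by
      rw [hSval, hSval, hIcc, hIcc]
      exact Finset.sum_Ioc_consecutive _ (Nat.zero_le m) hmp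
    have hIccIoc : Finset.Icc (p - k + 1) p = Finset.Ioc m p := by
      rw [hm, Finset.Icc_add_one_left_eq_Ioc]
    have hpossum : ∑ j ∈ Finset.Ioc m p, Real.log (b j) ≤ -(c / 2) * k := by
      linarith [hsum, hsplit]
    have hprodpos : ∀ j ∈ Finset.Ioc m p, b j ≠ 0 := by
      intro j hj
      rw [Finset.mem_Ioc] at hj
      exact ne_of_gt (hbpos j (Nat.succ_le_of_lt (Nat.lt_of_le_of_lt (Nat.zero_le m) hj.1)))
    have hprodpos' : 0 < ∏ j ∈ Finset.Ioc m p, b j := by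
      apply Finset.prod_pos
      intro j hj
      rw [Finset.mem_Ioc] at hj
      exact hbpos j (Nat.succ_le_of_lt (Nat.lt_of_le_of_lt (Nat.zero_le m) hj.1))
    rw [hIccIoc]
    have hlog : Real.log (∏ j ∈ Finset.Ioc m p, b j) = ∑ j ∈ Finset.Ioc m p, Real.log (b j) :=
      Real.log_prod hprodpos
    have : Real.log (∏ j ∈ Finset.Ioc m p, b j) ≤ -(c / 2) * k := by rw [hlog]; exact hpossum
    calc ∏ j ∈ Finset.Ioc m p, b j
        = Real.exp (Real.log (∏ j ∈ Finset.Ioc m p, b j)) := (Real.exp_log hprodpos').symm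
      _ ≤ Real.exp (-(c / 2) * k) := Real.exp_le_exp.2 this
      _ = σ ^ k := by
          rw [hσ, ← Real.exp_nat_mul]
          ring_nf
  -- conclude infinitude
  intro hfin
  obtain ⟨M, hM⟩ := hfin.bddAbove
  obtain ⟨p, hMp, hp⟩ := key M
  exact absurd (hM hp) (Nat.not_le.2 hMp)
end

section
/- Let μ be a measure on a measurable space, let ε > 0 and γ > 0, and let C and A be measurable sets with C ⊆ A, 0 < μ(C) < ∞ and μ(A \ C) < ε·μ(C). Let I be a finite index set and let (V_i)_{i∈I} and (W_i)_{i∈I} be families of measurable sets such that: C ⊆ ⋃_{i∈I} V_i; W_i ⊆ V_i ⊆ A for every i ∈ I; μ(W_i) ≥ γ·μ(V_i) for every i ∈ I; and the sets (W_i)_{i∈I} are pairwise disjoint. Then ∑_{i∈I} μ(W_i) ≥ γ·μ(C), and there exists i ∈ I with μ(W_i) > 0 and μ(W_i \ C) ≤ (ε/γ)·μ(W_i), i.e. the relative measure of C in W_i is at least 1 − ε/γ. -/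
open MeasureTheory

/-- **Measure-theoretic pigeonhole.** If `C ⊆ A` with `0 < μ C < ∞` and
`μ(A \ C) < ε μ(C)`, and `(V_i)_{i ∈ I}` covers `C` with `W_i ⊆ V_i ⊆ A`,
`μ(W_i) ≥ γ μ(V_i)` and the `W_i` pairwise disjoint, then `∑ μ(W_i) ≥ γ μ(C)` and
some `W_i` has `μ(W_i) > 0` and `μ(W_i \ C) ≤ (ε/γ) μ(W_i)`. -/
theorem measure_pigeonhole {Ω : Type*} [MeasurableSpace Ω] (μ : Measure Ω)
    (ε γ : ℝ) (hε : 0 < ε) (hγ : 0 < γ)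
    (C A : Set Ω) (hCm : MeasurableSet C) (hAm : MeasurableSet A)
    (hCA : C ⊆ A) (hC0 : 0 < μ C) (hCfin : μ C < ⊤)
    (hAC : μ (A \ C) < ENNReal.ofReal ε * μ C)
    {ι : Type*} (I : Finset ι) (V W : ι → Set Ω)
    (hVm : ∀ i ∈ I, MeasurableSet (V i)) (hWm : ∀ i ∈ I, MeasurableSet (W i))
    (hcover : C ⊆ ⋃ i ∈ I, V i)
    (hWV : ∀ i ∈ I, W i ⊆ V i) (hVA : ∀ i ∈ I, V i ⊆ A)
    (hγW : ∀ i ∈ I, ENNReal.ofReal γ * μ (V i) ≤ μ (W i))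
    (hdisj : ∀ i ∈ I, ∀ j ∈ I, i ≠ j → Disjoint (W i) (W j)) :
    ENNReal.ofReal γ * μ C ≤ ∑ i ∈ I, μ (W i) ∧
    ∃ i ∈ I, 0 < μ (W i) ∧ μ (W i \ C) ≤ ENNReal.ofReal (ε / γ) * μ (W i) := by
  have hsum : ENNReal.ofReal γ * μ C ≤ ∑ i ∈ I, μ (W i) := by
    calc ENNReal.ofReal γ * μ C ≤ ENNReal.ofReal γ * ∑ i ∈ I, μ (V i) := by
          refine mul_le_mul_right ((measure_mono hcover).trans ?_) _
          exact measure_biUnion_finset_le I V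
      _ = ∑ i ∈ I, ENNReal.ofReal γ * μ (V i) := Finset.mul_sum _ _ _
      _ ≤ ∑ i ∈ I, μ (W i) := Finset.sum_le_sum hγW
  refine ⟨hsum, ?_⟩
  by_contra hcon
  push_neg at hcon
  have key : ∀ i ∈ I, ENNReal.ofReal (ε / γ) * μ (W i) ≤ μ (W i \ C) := by
    intro i hi
    rcases eq_or_lt_of_le (zero_le : 0 ≤ μ (W i)) with h0 | h0
    · have : μ (W i \ C) ≤ μ (W i) := measure_mono Set.diff_subset
      simp [← h0] at this ⊢
    · exact (hcon i hi h0).le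
  have hWC : ∑ i ∈ I, μ (W i \ C) ≤ μ (A \ C) := by
    have := measure_biUnion_finset (μ := μ) (s := I) (f := fun i => W i \ C)
      (fun i hi j hj hij => (hdisj i hi j hj hij).mono Set.diff_subset Set.diff_subset)
      (fun i hi => (hWm i hi).diff hCm)
    rw [← this]
    refine measure_mono (Set.iUnion₂_subset fun i hi => ?_)
    exact Set.diff_subset_diff_left ((hWV i hi).trans (hVA i hi))
  have hchain : ENNReal.ofReal ε * μ C ≤ μ (A \ C) := by
    have h1 : ENNReal.ofReal ε * μ C
        = ENNReal.ofReal (ε / γ) * (ENNReal.ofReal γ * μ C) := by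
      rw [← mul_assoc, ← ENNReal.ofReal_mul (by positivity), div_mul_cancel₀ _ hγ.ne']
    calc ENNReal.ofReal ε * μ C
        = ENNReal.ofReal (ε / γ) * (ENNReal.ofReal γ * μ C) := h1
      _ ≤ ENNReal.ofReal (ε / γ) * ∑ i ∈ I, μ (W i) := mul_le_mul_right hsum _
      _ = ∑ i ∈ I, ENNReal.ofReal (ε / γ) * μ (W i) := Finset.mul_sum _ _ _
      _ ≤ ∑ i ∈ I, μ (W i \ C) := Finset.sum_le_sum key
      _ ≤ μ (A \ C) := hWC
  exact absurd hchain (not_le.mpr hAC)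
end
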